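/- The polynomial f_r of the previous statement satisfies f_r(-X) = (-1)^r f_r(X) in ℚ[X]. -/

import Mathlib

open Polynomial

open Finset

/-- The polynomial `∏_{j=1}^{k} (1 + j x)^j · ∏_{j=k+1}^{2k} (1 + j x)^{2k-j}` over ℚ. -/
noncomputable def genPoly (k : ℕ) : Polynomial ℚ :=
  (∏ j ∈ Finset.Icc 1 k, (1 + Polynomial.C (j : ℚ) * Polynomial.X) ^ j) *
    ∏ j ∈ Finset.Icc (k + 1) (2 * k), (1 + Polynomial.C (j : ℚ) * Polynomial.X) ^ (2 * k - j)


lemma eq_of_nat_eval (p q : Polynomial ℚ) (h : ∀ n : ℕ, p.eval (n : ℚ) = q.eval (n : ℚ)) :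
    p = q := by
  apply Polynomial.eq_of_infinite_eval_eq
  apply Set.infinite_of_injective_forall_mem (f := fun n : ℕ => (n : ℚ))
  · exact fun a b hab => Nat.cast_injective hab
  · exact fun n => h n

noncomputable def Rpoly (t : ℕ) : Polynomial ℚ :=
  ∑ i ∈ Finset.range (t + 1),
    Polynomial.C ((_root_.bernoulli i) * ((t + 1).choose i) / (t + 1)) * Polynomial.X ^ (t + 1 - i)

lemma Rpoly_eval (t n : ℕ) : (Rpoly t).eval (n : ℚ) = ∑ j ∈ Finset.range n, (j : ℚ) ^ t := by
  rw [sum_range_pow, Rpoly, Polynomial.eval_finset_sum]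
  simp only [eval_mul, eval_C, eval_pow, eval_X]
  exact Finset.sum_congr rfl fun i _ => by ring

lemma Rpoly_step (t : ℕ) : (Rpoly t).comp (X + 1) = Rpoly t + X ^ t := by
  apply eq_of_nat_eval
  intro n
  have h : ((n : ℚ) + 1) = ((n + 1 : ℕ) : ℚ) := by push_cast; ring
  simp only [eval_comp, eval_add, eval_X, eval_one, eval_pow, h, Rpoly_eval]
  rw [Finset.sum_range_succ]

lemma Rpoly_eval_zero (t : ℕ) : (Rpoly t).eval 0 = 0 := by
  have := Rpoly_eval t 0
  simpa using this

lemma Rpoly_eval_one (t : ℕ) (ht : 1 ≤ t) : (Rpoly t).eval 1 = 0 := by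
  have := Rpoly_eval t 1
  simp only [Nat.cast_one, Finset.sum_range_one, Nat.cast_zero] at this
  rw [this, zero_pow (by omega)]

lemma const_of_step (P : Polynomial ℚ) (h : P.comp (X + 1) = P) : P = C (P.eval 0) := by
  apply eq_of_nat_eval
  intro n
  induction n with
  | zero => simp
  | succ n ih =>
    have h2 := congrArg (Polynomial.eval (n : ℚ)) h
    rw [eval_comp] at h2
    simp only [eval_add, eval_X, eval_one] at h2
    rw [eval_C] at ih ⊢
    rw [← ih, ← h2]
    push_cast
    ring_nf

lemma Rpoly_reflect (t : ℕ) (ht : 1 ≤ t) :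
    (Rpoly t).comp (1 - X) = C ((-1 : ℚ) ^ (t + 1)) * Rpoly t := by
  set D : Polynomial ℚ :=
    C ((-1 : ℚ) ^ (t + 1)) * (Rpoly t).comp (1 - X) - Rpoly t with hD
  have hcomp : D.comp (X + 1) = D := by
    have h1 : ((Rpoly t).comp (1 - X)).comp (X + 1) = (Rpoly t).comp (-X) := by
      rw [Polynomial.comp_assoc]
      congr 1
      simp only [sub_comp, one_comp, X_comp]
      ring
    have h2 : (Rpoly t).comp (-X) = (Rpoly t).comp (1 - X) - (-X) ^ t := by
      have h3 := congrArg (fun p => Polynomial.comp p (-X)) (Rpoly_step t)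
      rw [Polynomial.comp_assoc] at h3
      have hx : (X + 1 : Polynomial ℚ).comp (-X) = 1 - X := by
        simp only [add_comp, X_comp, one_comp]; ring
      rw [hx, add_comp, pow_comp, X_comp] at h3
      rw [h3]; ring
    rw [hD, sub_comp, mul_comp, C_comp, h1, h2, Rpoly_step t]
    simp only [map_pow, map_neg, map_one]
    have hu : ((-1 : Polynomial ℚ) ^ t) * ((-1) ^ t) = 1 := by
      rw [← pow_add, ← two_mul, pow_mul]; norm_num
    rw [pow_succ, neg_pow (X : Polynomial ℚ) t]
    linear_combination (X ^ t : Polynomial ℚ) * hu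
  have hconst := const_of_step D hcomp
  have h0 : D.eval 0 = 0 := by
    rw [hD]
    simp only [eval_sub, eval_mul, eval_C, eval_comp, eval_sub, eval_one, eval_X]
    norm_num
    rw [Rpoly_eval_one t ht, Rpoly_eval_zero t]
    ring
  rw [h0] at hconst
  have : D = 0 := by rw [hconst]; simp
  rw [hD] at this
  have h4 : C ((-1 : ℚ) ^ (t + 1)) * (Rpoly t).comp (1 - X) = Rpoly t := by
    linear_combination this
  calc (Rpoly t).comp (1 - X)
      = C ((-1 : ℚ) ^ (t + 1)) * (C ((-1 : ℚ) ^ (t + 1)) * (Rpoly t).comp (1 - X)) := by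
        rw [← mul_assoc, ← map_mul, ← pow_add, ← two_mul, pow_mul]
        norm_num
    _ = C ((-1 : ℚ) ^ (t + 1)) * Rpoly t := by rw [h4]



noncomputable def Ppoly (m : ℕ) : Polynomial ℚ :=
  (Rpoly (m + 1)).comp (X + 1)
    + 2 * X * ((Rpoly m).comp (2 * X + 1) - (Rpoly m).comp (X + 1))
    - ((Rpoly (m + 1)).comp (2 * X + 1) - (Rpoly (m + 1)).comp (X + 1))

lemma Rpoly_comp_two_X_add_one (t : ℕ) :
    (Rpoly t).comp (2 * X + 1) = (Rpoly t).comp (2 * X) + (2 * X) ^ t := by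
  have h := congrArg (fun p => Polynomial.comp p (2 * X)) (Rpoly_step t)
  rw [Polynomial.comp_assoc] at h
  have hx : (X + 1 : Polynomial ℚ).comp (2 * X) = 2 * X + 1 := by
    simp [add_comp, X_comp, one_comp]
  rw [hx, add_comp, pow_comp, X_comp] at h
  exact h

lemma Ppoly_reduced (m : ℕ) :
    Ppoly m = 2 * Rpoly (m + 1) + 2 * X * ((Rpoly m).comp (2 * X))
      - 2 * X * Rpoly m - (Rpoly (m + 1)).comp (2 * X) := by
  rw [Ppoly, Rpoly_step, Rpoly_step, Rpoly_comp_two_X_add_one, Rpoly_comp_two_X_add_one]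
  ring

lemma Rpoly_comp_neg (t : ℕ) (ht : 1 ≤ t) :
    (Rpoly t).comp (-X) = C ((-1 : ℚ) ^ (t + 1)) * (Rpoly t + X ^ t) := by
  have h1 : (Rpoly t).comp (-X) = ((Rpoly t).comp (1 - X)).comp (X + 1) := by
    rw [Polynomial.comp_assoc]
    congr 1
    simp only [sub_comp, one_comp, X_comp]
    ring
  rw [h1, Rpoly_reflect t ht, mul_comp, C_comp, Rpoly_step]

lemma Rpoly_comp_neg2 (t : ℕ) (ht : 1 ≤ t) :
    (Rpoly t).comp (-(2 * X)) = C ((-1 : ℚ) ^ (t + 1)) * ((Rpoly t).comp (2 * X) + (2 * X) ^ t) := by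
  have h1 : (Rpoly t).comp (-(2 * X)) = ((Rpoly t).comp (-X)).comp (2 * X) := by
    rw [Polynomial.comp_assoc]
    congr 1
    simp [neg_comp, X_comp]
  rw [h1, Rpoly_comp_neg t ht, mul_comp, C_comp, add_comp, pow_comp, X_comp]

lemma Ppoly_parity (m : ℕ) (hm : 1 ≤ m) :
    (Ppoly m).comp (-X) = C ((-1 : ℚ) ^ m) * Ppoly m := by
  rw [Ppoly_reduced]
  simp only [sub_comp, add_comp, mul_comp, X_comp]
  have h2 : ((2 : Polynomial ℚ)).comp (-X) = 2 := by simp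
  rw [h2]
  have hA2 : ((Rpoly (m + 1)).comp (2 * X)).comp (-X) = (Rpoly (m + 1)).comp (-(2 * X)) := by
    rw [Polynomial.comp_assoc]; congr 1; simp only [mul_comp, X_comp, h2]; ring
  have hB2 : ((Rpoly m).comp (2 * X)).comp (-X) = (Rpoly m).comp (-(2 * X)) := by
    rw [Polynomial.comp_assoc]; congr 1; simp only [mul_comp, X_comp, h2]; ring
  rw [hA2, hB2, Rpoly_comp_neg (m + 1) (by omega), Rpoly_comp_neg m hm,
    Rpoly_comp_neg2 (m + 1) (by omega), Rpoly_comp_neg2 m hm]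
  have e1 : ((-1 : ℚ)) ^ (m + 1 + 1) = (-1 : ℚ) ^ m := by rw [pow_succ, pow_succ]; ring
  have e2 : ((-1 : ℚ)) ^ (m + 1) = -((-1 : ℚ) ^ m) := by rw [pow_succ]; ring
  rw [e1, e2, map_neg]
  ring

lemma sum_range_succ_eq_insert (f : ℕ → ℚ) (k : ℕ) :
    ∑ j ∈ Finset.range (k + 1), f j = f 0 + ∑ j ∈ Finset.Icc 1 k, f j := by
  have h : Finset.range (k + 1) = insert 0 (Finset.Icc 1 k) := by
    ext x; simp [Finset.mem_range, Finset.mem_Icc]; omega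
  rw [h, Finset.sum_insert (by simp)]

lemma sum_Icc_eq_sub (f : ℕ → ℚ) (k : ℕ) :
    ∑ j ∈ Finset.Icc (k + 1) (2 * k), f j
      = ∑ j ∈ Finset.range (2 * k + 1), f j - ∑ j ∈ Finset.range (k + 1), f j := by
  have h1 : Finset.Icc (k + 1) (2 * k) = Finset.Ico (k + 1) (2 * k + 1) := by
    ext x; simp [Finset.mem_Icc, Finset.mem_Ico]
  have h2 := Finset.sum_Ico_consecutive f (by omega : 0 ≤ k + 1) (by omega : k + 1 ≤ 2 * k + 1)
  rw [h1]
  simp only [Finset.range_eq_Ico]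
  linarith [h2]

lemma Ppoly_eval (m k : ℕ) :
    (Ppoly m).eval (k : ℚ) =
      (∑ j ∈ Finset.Icc 1 k, (j : ℚ) * (j : ℚ) ^ m)
        + ∑ j ∈ Finset.Icc (k + 1) (2 * k), ((2 * k - j : ℕ) : ℚ) * (j : ℚ) ^ m := by
  have c1 : ((k : ℚ) + 1) = ((k + 1 : ℕ) : ℚ) := by push_cast; ring
  have c2 : (2 * (k : ℚ) + 1) = ((2 * k + 1 : ℕ) : ℚ) := by push_cast; ring
  have hL : (Ppoly m).eval (k : ℚ) =
      (∑ j ∈ Finset.range (k + 1), (j : ℚ) ^ (m + 1))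
        + 2 * (k : ℚ) * ((∑ j ∈ Finset.range (2 * k + 1), (j : ℚ) ^ m)
            - ∑ j ∈ Finset.range (k + 1), (j : ℚ) ^ m)
        - ((∑ j ∈ Finset.range (2 * k + 1), (j : ℚ) ^ (m + 1))
            - ∑ j ∈ Finset.range (k + 1), (j : ℚ) ^ (m + 1)) := by
    simp only [Ppoly, eval_sub, eval_add, eval_mul, eval_comp, eval_ofNat, eval_X, eval_one,
      eval_add, eval_mul]
    rw [c1, c2, Rpoly_eval, Rpoly_eval, Rpoly_eval, Rpoly_eval]
  rw [hL]
  -- rewrite the RHS second sum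
  have hcast : ∑ j ∈ Finset.Icc (k + 1) (2 * k), ((2 * k - j : ℕ) : ℚ) * (j : ℚ) ^ m
      = ∑ j ∈ Finset.Icc (k + 1) (2 * k), ((2 * (k:ℚ)) * (j : ℚ) ^ m - (j:ℚ) ^ (m+1)) := by
    apply Finset.sum_congr rfl
    intro j hj
    simp only [Finset.mem_Icc] at hj
    rw [Nat.cast_sub (by omega)]
    push_cast
    ring
  rw [hcast, Finset.sum_sub_distrib, ← Finset.mul_sum]
  rw [sum_Icc_eq_sub (fun j => (j:ℚ) ^ m), sum_Icc_eq_sub (fun j => (j:ℚ) ^ (m+1))]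
  have h0 : ∑ j ∈ Finset.Icc 1 k, (j : ℚ) * (j : ℚ) ^ m
      = ∑ j ∈ Finset.range (k + 1), (j : ℚ) ^ (m + 1) := by
    rw [sum_range_succ_eq_insert (fun j => (j:ℚ) ^ (m+1)) k]
    simp only [Nat.cast_zero, zero_pow (Nat.succ_ne_zero m), zero_add]
    exact Finset.sum_congr rfl fun j _ => by ring
  rw [h0]
  ring

section PS
open PowerSeries

noncomputable def gser (p : ℕ → ℚ) : PowerSeries ℚ :=
  PowerSeries.mk fun m => if m = 0 then 0 else (-1 : ℚ) ^ (m + 1) * p m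

def Nrec (p : ℕ → ℚ) (Q : PowerSeries ℚ) : Prop :=
  PowerSeries.X * Q.derivativeFun = gser p * Q

lemma gser_add (p q : ℕ → ℚ) : gser (fun m => p m + q m) = gser p + gser q := by
  ext n
  simp only [gser, coeff_mk, map_add]
  split <;> ring

lemma nrec_one : Nrec (fun _ => 0) 1 := by
  have h : gser (fun _ => 0) = 0 := by
    ext n; simp [gser]
  unfold Nrec
  rw [derivativeFun_one, h, mul_zero, zero_mul]

lemma nrec_mul {p q : ℕ → ℚ} {Q R : PowerSeries ℚ} (hp : Nrec p Q) (hq : Nrec q R) :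
    Nrec (fun m => p m + q m) (Q * R) := by
  unfold Nrec at *
  rw [derivativeFun_mul, gser_add]
  rw [smul_eq_mul, smul_eq_mul]
  calc PowerSeries.X * (Q * R.derivativeFun + R * Q.derivativeFun)
      = Q * (PowerSeries.X * R.derivativeFun) + R * (PowerSeries.X * Q.derivativeFun) := by ring
    _ = Q * (gser q * R) + R * (gser p * Q) := by rw [hp, hq]
    _ = (gser p + gser q) * (Q * R) := by ring

lemma nrec_pow {p : ℕ → ℚ} {Q : PowerSeries ℚ} (hp : Nrec p Q) (w : ℕ) :
    Nrec (fun m => (w : ℚ) * p m) (Q ^ w) := by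
  induction w with
  | zero => simpa using nrec_one
  | succ n ih =>
    rw [show (fun m => ((n + 1 : ℕ) : ℚ) * p m) = (fun m => ((n : ℕ) : ℚ) * p m + p m)
      from funext fun m => by push_cast; ring, pow_succ]
    exact nrec_mul ih hp

lemma nrec_linear (a : ℚ) :
    Nrec (fun m => a ^ m) ((1 + Polynomial.C a * Polynomial.X : Polynomial ℚ) : PowerSeries ℚ) := by
  unfold Nrec
  have hd : ((1 + Polynomial.C a * Polynomial.X : Polynomial ℚ) : PowerSeries ℚ).derivativeFun
      = PowerSeries.C a := by
    change derivative ℚ _ = _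
    rw [derivativeFun_coe]
    simp
  rw [hd]
  have hcoe : ((1 + Polynomial.C a * Polynomial.X : Polynomial ℚ) : PowerSeries ℚ)
      = 1 + PowerSeries.C a * PowerSeries.X := by
    push_cast
    simp [Polynomial.coe_add, Polynomial.coe_mul, Polynomial.coe_C, Polynomial.coe_X]
  rw [hcoe]
  ext n
  rcases n with _ | n
  · simp [PowerSeries.coeff_zero_eq_constantCoeff, gser]
  · rw [PowerSeries.coeff_succ_X_mul]
    rw [PowerSeries.coeff_C]
    rw [mul_add, mul_one, ← mul_assoc, map_add]
    rw [PowerSeries.coeff_succ_mul_X, PowerSeries.coeff_mul_C]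
    rcases n with _ | n
    · simp [gser]
    · simp only [gser, coeff_mk, Nat.succ_ne_zero, if_false, Nat.add_eq_zero, and_false]
      rw [pow_succ (-1 : ℚ) (n + 1 + 1)]
      ring

lemma nrec_prod {ι : Type*} [DecidableEq ι] (s : Finset ι) (p : ι → ℕ → ℚ) (Q : ι → PowerSeries ℚ)
    (h : ∀ i ∈ s, Nrec (p i) (Q i)) :
    Nrec (fun m => ∑ i ∈ s, p i m) (∏ i ∈ s, Q i) := by
  induction s using Finset.induction with
  | empty => simpa using nrec_one
  | @insert a s hnotmem ih =>
    rw [Finset.prod_insert hnotmem,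
      show (fun m => ∑ i ∈ insert a s, p i m) = (fun m => p a m + ∑ i ∈ s, p i m)
        from funext fun m => Finset.sum_insert hnotmem]
    exact nrec_mul (h a (Finset.mem_insert_self a s)) (ih fun i hi => h i (Finset.mem_insert_of_mem hi))


lemma nrec_genPoly (k : ℕ) :
    Nrec (fun m => (∑ j ∈ Finset.Icc 1 k, (j : ℚ) * (j : ℚ) ^ m)
        + ∑ j ∈ Finset.Icc (k + 1) (2 * k), ((2 * k - j : ℕ) : ℚ) * (j : ℚ) ^ m)
      ((genPoly k : Polynomial ℚ) : PowerSeries ℚ) := by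
  have h1 : Nrec (fun m => ∑ j ∈ Finset.Icc 1 k, (j : ℚ) * (j : ℚ) ^ m)
      (∏ j ∈ Finset.Icc 1 k, ((((1 + Polynomial.C (j : ℚ) * Polynomial.X) ^ j : Polynomial ℚ)) : PowerSeries ℚ)) := by
    apply nrec_prod
    intro j _
    have := nrec_pow (nrec_linear (j : ℚ)) j
    rw [Polynomial.coe_pow]
    exact this
  have h2 : Nrec (fun m => ∑ j ∈ Finset.Icc (k + 1) (2 * k), ((2 * k - j : ℕ) : ℚ) * (j : ℚ) ^ m)
      (∏ j ∈ Finset.Icc (k + 1) (2 * k),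
        ((((1 + Polynomial.C (j : ℚ) * Polynomial.X) ^ (2 * k - j) : Polynomial ℚ)) : PowerSeries ℚ)) := by
    apply nrec_prod
    intro j _
    have := nrec_pow (nrec_linear (j : ℚ)) (2 * k - j)
    rw [Polynomial.coe_pow]
    exact this
  have := nrec_mul h1 h2
  rw [genPoly, Polynomial.coe_mul]
  convert this using 2
  · rw [← Polynomial.coeToPowerSeries.ringHom_apply, map_prod]
    simp only [Polynomial.coeToPowerSeries.ringHom_apply]
  · rw [← Polynomial.coeToPowerSeries.ringHom_apply, map_prod]
    simp only [Polynomial.coeToPowerSeries.ringHom_apply]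

lemma sum_range_succ_eq_insert' (f : ℕ → ℚ) (k : ℕ) :
    ∑ j ∈ Finset.range (k + 1), f j = f 0 + ∑ j ∈ Finset.Icc 1 k, f j := by
  have h : Finset.range (k + 1) = insert 0 (Finset.Icc 1 k) := by
    ext x; simp [Finset.mem_range, Finset.mem_Icc]; omega
  rw [h, Finset.sum_insert (by simp)]

lemma coeff_rec (k r : ℕ) (hr : 1 ≤ r) :
    (r : ℚ) * (genPoly k).coeff r
      = ∑ m ∈ Finset.Icc 1 r,
          (-1 : ℚ) ^ (m + 1)
            * ((∑ j ∈ Finset.Icc 1 k, (j : ℚ) * (j : ℚ) ^ m)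
                + ∑ j ∈ Finset.Icc (k + 1) (2 * k), ((2 * k - j : ℕ) : ℚ) * (j : ℚ) ^ m)
            * (genPoly k).coeff (r - m) := by
  obtain ⟨s, rfl⟩ : ∃ s, r = s + 1 := ⟨r - 1, by omega⟩
  have h := nrec_genPoly k
  unfold Nrec at h
  have h' := congrArg (PowerSeries.coeff (s + 1)) h
  rw [PowerSeries.coeff_succ_X_mul] at h'
  change PowerSeries.coeff s (derivative ℚ _) = _ at h'
  rw [PowerSeries.coeff_derivativeFun,
    Polynomial.coeff_coe, PowerSeries.coeff_mul,
    Finset.Nat.sum_antidiagonal_eq_sum_range_succ_mk,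
    sum_range_succ_eq_insert'] at h'
  simp only [gser, PowerSeries.coeff_mk, if_true, eq_self_iff_true, zero_mul, zero_add,
    Polynomial.coeff_coe] at h'
  have hc : ((s + 1 : ℕ) : ℚ) = (s : ℚ) + 1 := by push_cast; ring
  rw [mul_comm, hc, h']
  apply Finset.sum_congr rfl
  intro m hm
  simp only [Finset.mem_Icc] at hm
  rw [if_neg (by omega)]

end PS




noncomputable def Fpoly : ℕ → Polynomial ℚ
  | 0 => 1
  | (r + 1) =>
    Polynomial.C (1 / (r + 1 : ℚ)) *
      ∑ m ∈ (Finset.Icc 1 (r + 1)).attach,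
        Polynomial.C ((-1 : ℚ) ^ ((m : ℕ) + 1)) * Ppoly (m : ℕ) * Fpoly (r + 1 - (m : ℕ))
  decreasing_by
    have hm := m.2
    simp only [Finset.mem_Icc] at hm
    omega

lemma genPoly_coeff_zero (k : ℕ) : (genPoly k).coeff 0 = 1 := by
  rw [Polynomial.coeff_zero_eq_eval_zero]
  simp [genPoly, Polynomial.eval_prod]

lemma Fpoly_eval (r : ℕ) : ∀ k : ℕ, (Fpoly r).eval (k : ℚ) = (genPoly k).coeff r := by
  induction r using Nat.strong_induction_on with
  | _ r ih =>
    intro k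
    match r with
    | 0 => simp [Fpoly, genPoly_coeff_zero]
    | (s + 1) =>
      have hne : ((s : ℚ) + 1) ≠ 0 := by positivity
      rw [Fpoly]
      rw [eval_mul, eval_C, Polynomial.eval_finset_sum]
      have hsum : ∑ m ∈ (Finset.Icc 1 (s + 1)).attach,
            ((Polynomial.C ((-1 : ℚ) ^ ((m : ℕ) + 1)) * Ppoly (m : ℕ)
              * Fpoly (s + 1 - (m : ℕ))).eval (k : ℚ))
          = ∑ m ∈ Finset.Icc 1 (s + 1),
            (-1 : ℚ) ^ (m + 1)
              * ((∑ j ∈ Finset.Icc 1 k, (j : ℚ) * (j : ℚ) ^ m)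
                  + ∑ j ∈ Finset.Icc (k + 1) (2 * k), ((2 * k - j : ℕ) : ℚ) * (j : ℚ) ^ m)
              * (genPoly k).coeff (s + 1 - m) := by
        rw [← Finset.sum_attach (Finset.Icc 1 (s + 1)) (fun m =>
          (-1 : ℚ) ^ (m + 1)
            * ((∑ j ∈ Finset.Icc 1 k, (j : ℚ) * (j : ℚ) ^ m)
                + ∑ j ∈ Finset.Icc (k + 1) (2 * k), ((2 * k - j : ℕ) : ℚ) * (j : ℚ) ^ m)
            * (genPoly k).coeff (s + 1 - m))]
        apply Finset.sum_congr rfl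
        intro m _
        have hm := m.2
        simp only [Finset.mem_Icc] at hm
        rw [eval_mul, eval_mul, eval_C, Ppoly_eval, ih (s + 1 - (m : ℕ)) (by omega) k]
      rw [hsum, ← coeff_rec k (s + 1) (by omega)]
      push_cast
      field_simp

lemma Fpoly_parity (r : ℕ) : (Fpoly r).comp (-X) = C ((-1 : ℚ) ^ r) * Fpoly r := by
  induction r using Nat.strong_induction_on with
  | _ r ih =>
    match r with
    | 0 => simp [Fpoly]
    | (s + 1) =>
      rw [Fpoly, mul_comp, C_comp, Polynomial.sum_comp]
      rw [show C ((-1 : ℚ) ^ (s + 1)) *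
          (Polynomial.C (1 / (s + 1 : ℚ)) *
            ∑ m ∈ (Finset.Icc 1 (s + 1)).attach,
              Polynomial.C ((-1 : ℚ) ^ ((m : ℕ) + 1)) * Ppoly (m : ℕ) * Fpoly (s + 1 - (m : ℕ)))
          = Polynomial.C (1 / (s + 1 : ℚ)) *
            ∑ m ∈ (Finset.Icc 1 (s + 1)).attach,
              C ((-1 : ℚ) ^ (s + 1)) *
                (Polynomial.C ((-1 : ℚ) ^ ((m : ℕ) + 1)) * Ppoly (m : ℕ)
                  * Fpoly (s + 1 - (m : ℕ)))
          from by rw [mul_left_comm, Finset.mul_sum]]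
      congr 1
      apply Finset.sum_congr rfl
      intro m _
      have hm := m.2
      simp only [Finset.mem_Icc] at hm
      rw [mul_comp, mul_comp, C_comp, Ppoly_parity (m : ℕ) (by omega),
        ih (s + 1 - (m : ℕ)) (by omega)]
      have key : ((-1 : ℚ)) ^ (m : ℕ) * (-1 : ℚ) ^ (s + 1 - (m : ℕ)) = (-1 : ℚ) ^ (s + 1) := by
        rw [← pow_add]
        congr 1
        omega
      calc Polynomial.C ((-1 : ℚ) ^ ((m : ℕ) + 1)) * (C ((-1 : ℚ) ^ (m : ℕ)) * Ppoly (m : ℕ))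
            * (C ((-1 : ℚ) ^ (s + 1 - (m : ℕ))) * Fpoly (s + 1 - (m : ℕ)))
          = C ((-1 : ℚ) ^ (m : ℕ) * (-1 : ℚ) ^ (s + 1 - (m : ℕ))) *
              (Polynomial.C ((-1 : ℚ) ^ ((m : ℕ) + 1)) * Ppoly (m : ℕ)
                * Fpoly (s + 1 - (m : ℕ))) := by
            rw [map_mul]; ring
        _ = C ((-1 : ℚ) ^ (s + 1)) *
              (Polynomial.C ((-1 : ℚ) ^ ((m : ℕ) + 1)) * Ppoly (m : ℕ)
                * Fpoly (s + 1 - (m : ℕ))) := by rw [key]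

theorem stmt_13 (r : ℕ) (f : Polynomial ℚ)
    (hdeg : f.natDegree = 3 * r)
    (hval : ∀ k : ℕ, 0 < k → r ≤ k ^ 2 → (genPoly k).coeff r = f.eval (k : ℚ)) :
    f.comp (-Polynomial.X) = Polynomial.C ((-1 : ℚ) ^ r) * f := by
  have hf : f = Fpoly r := by
    apply Polynomial.eq_of_infinite_eval_eq
    apply Set.infinite_of_injective_forall_mem (f := fun n : ℕ => ((n + r + 1 : ℕ) : ℚ))
    · intro a b hab
      have : a + r + 1 = b + r + 1 := Nat.cast_inj.mp hab
      omega
    · intro n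
      have hpos : 0 < n + r + 1 := by omega
      have hk2 : r ≤ (n + r + 1) ^ 2 := by nlinarith
      show f.eval _ = (Fpoly r).eval _
      rw [← hval (n + r + 1) hpos hk2, Fpoly_eval r (n + r + 1)]
  rw [hf, Fpoly_parity]
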